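/- Let a₀,…,a_r be distinct elements of ℤ and f = g/d ∈ ℚ[x] with g ∈ ℤ[x], d ∈ ℤ nonzero, deg f ≤ r. If a₀,…,a_r form a d-sequence for S ⊆ ℤ (i.e., for each prime p | d, a_i ≡ u_i mod p^{e+1} where {u_i} is a p-sequence of S and p^e is the p-adic valuation of the associated factorial product), then f ∈ Int(S,ℤ) if and only if f(a_i) ∈ ℤ for all 0 ≤ i ≤ r. -/

import Mathlib

open Finset

/-- A p-sequence {u_i} of S ⊆ ℤ: pairwise distinct elements of S such that for every
k > 0 the Newton quotient (x−u₀)⋯(x−u_{k−1})/((u_k−u₀)⋯(u_k−u_{k−1})) maps S into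
ℤ_(p); equivalently p^{e_k} divides (s−u₀)⋯(s−u_{k−1}) for every s ∈ S, where p^{e_k}
is the exact p-part of (u_k−u₀)⋯(u_k−u_{k−1}). -/
def IsPSeqInt (p : ℕ) (S : Set ℤ) (u : ℕ → ℤ) : Prop :=
  (∀ i, u i ∈ S) ∧ (∀ i j, i < j → u i ≠ u j) ∧
  ∀ k, 0 < k → ∀ s ∈ S,
    (p : ℤ) ^ (padicValInt p (∏ i ∈ range k, (u k - u i))) ∣ ∏ i ∈ range k, (s - u i)

/-- a₀,…,a_r is a d-sequence for S: for each prime p ∣ d there is a p-sequence {u_i}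
of S with a_i ≡ u_i (mod p^{e_r+1}), where p^{e_r} is the p-part of
(u_r−u₀)⋯(u_r−u_{r−1}). -/
def IsDSeqInt (d : ℤ) (S : Set ℤ) (r : ℕ) (a : ℕ → ℤ) : Prop :=
  ∀ p : ℕ, p.Prime → (p : ℤ) ∣ d →
    ∃ u : ℕ → ℤ, IsPSeqInt p S u ∧
      ∀ i ≤ r, (p : ℤ) ^ (padicValInt p (∏ j ∈ range r, (u r - u j)) + 1) ∣ (a i - u i)

section NewtonBasis

open Polynomial

lemma newton_expand (u : ℕ → ℤ) : ∀ (r : ℕ) (g : Polynomial ℤ), g.natDegree ≤ r →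
    ∃ c : ℕ → ℤ, g = ∑ j ∈ range (r + 1), C (c j) * ∏ i ∈ range j, (X - C (u i)) := by
  intro r
  induction r with
  | zero =>
    intro g hg
    exact ⟨fun _ => g.coeff 0, by simpa using (Polynomial.eq_C_of_natDegree_le_zero hg)⟩
  | succ r ih =>
    intro g hg
    set N : Polynomial ℤ := ∏ i ∈ range (r + 1), (X - C (u i)) with hN
    have hNm : N.Monic := monic_prod_of_monic _ _ fun i _ => monic_X_sub_C (u i)
    have hNd : N.natDegree = r + 1 := by
      rw [hN, natDegree_prod _ _ fun i _ => X_sub_C_ne_zero (u i)]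
      simp only [natDegree_X_sub_C, sum_const, card_range, smul_eq_mul, mul_one]
    have hb : N.coeff (r + 1) = 1 := by rw [← hNd]; exact hNm.coeff_natDegree
    have hdeg' : (g - C (g.coeff (r + 1)) * N).natDegree ≤ r := by
      rw [natDegree_le_iff_coeff_eq_zero]
      intro m hm
      rw [coeff_sub, coeff_C_mul]
      rcases eq_or_lt_of_le (Nat.succ_le_of_lt hm) with h | h
      · rw [← h, hb, mul_one, sub_self]
      · have h2 : g.coeff m = 0 := coeff_eq_zero_of_natDegree_lt (lt_of_le_of_lt hg h)
        have h3 : N.coeff m = 0 := coeff_eq_zero_of_natDegree_lt (by omega)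
        rw [h2, h3, mul_zero, sub_self]
    obtain ⟨c', hc'⟩ := ih (g - C (g.coeff (r + 1)) * N) hdeg'
    refine ⟨Function.update c' (r + 1) (g.coeff (r + 1)), ?_⟩
    rw [sum_range_succ]
    have h1 : ∑ j ∈ range (r + 1),
        C (Function.update c' (r + 1) (g.coeff (r + 1)) j) * ∏ i ∈ range j, (X - C (u i)) =
        ∑ j ∈ range (r + 1), C (c' j) * ∏ i ∈ range j, (X - C (u i)) :=
      Finset.sum_congr rfl fun j hj => by
        rw [Function.update_of_ne (by have := mem_range.mp hj; omega)]
    rw [h1, Function.update_self, ← hc', ← hN]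
    ring

end NewtonBasis

section PadicAux

variable {p : ℕ} [hp : Fact p.Prime]

lemma padicValInt_pow_self (n : ℕ) : padicValInt p ((p : ℤ) ^ n) = n := by
  rw [padicValInt, Int.natAbs_pow]
  simp [padicValNat.prime_pow]

lemma padicValInt_prod {ι : Type*} (s : Finset ι) (f : ι → ℤ) (hf : ∀ i ∈ s, f i ≠ 0) :
    padicValInt p (∏ i ∈ s, f i) = ∑ i ∈ s, padicValInt p (f i) := by
  classical
  induction s using Finset.cons_induction with
  | empty => simp [padicValInt.one]
  | cons a s ha ih =>
    rw [prod_cons, sum_cons,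
      padicValInt.mul (hf a (mem_cons_self a s))
        (prod_ne_zero_iff.mpr fun i hi => hf i (mem_cons_of_mem hi)),
      ih fun i hi => hf i (mem_cons_of_mem hi)]

lemma padicValInt_add_eq (z w : ℤ) (hz : z ≠ 0)
    (hw : (p : ℤ) ^ (padicValInt p z + 1) ∣ w) :
    z + w ≠ 0 ∧ padicValInt p (z + w) = padicValInt p z := by
  set m := padicValInt p z with hm
  have h1 : ¬ (p : ℤ) ^ (m + 1) ∣ z := by
    rw [padicValInt_dvd_iff]
    push_neg
    exact ⟨hz, by omega⟩
  have hne : z + w ≠ 0 := by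
    intro h
    refine h1 ?_
    have hzw : z = -w := by linarith
    rw [hzw]
    exact (dvd_neg).mpr hw
  refine ⟨hne, ?_⟩
  have hd : (p : ℤ) ^ m ∣ z + w :=
    dvd_add (padicValInt_dvd z) (dvd_trans (pow_dvd_pow _ (Nat.le_succ m)) hw)
  have hnd : ¬ (p : ℤ) ^ (m + 1) ∣ z + w := fun h => h1 (by simpa using dvd_sub h hw)
  rw [padicValInt_dvd_iff] at hd hnd
  push_neg at hnd
  rcases hd with h | h
  · exact absurd h hne
  · omega

end PadicAux

noncomputable abbrev eSeq (p : ℕ) (u : ℕ → ℤ) (k : ℕ) : ℕ :=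
  padicValInt p (∏ i ∈ range k, (u k - u i))

section PSeqCore

variable {p : ℕ} [hp : Fact p.Prime] {S : Set ℤ} {u : ℕ → ℤ}

lemma u_sub_ne (hu : IsPSeqInt p S u) {i k : ℕ} (h : i < k) : u k - u i ≠ 0 :=
  sub_ne_zero.mpr (Ne.symm (hu.2.1 i k h))

lemma prod_u_ne (hu : IsPSeqInt p S u) (k : ℕ) : ∏ i ∈ range k, (u k - u i) ≠ 0 :=
  prod_ne_zero_iff.mpr fun i hi => u_sub_ne hu (mem_range.mp hi)

lemma eSeq_eq_sum (hu : IsPSeqInt p S u) (k : ℕ) :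
    eSeq p u k = ∑ i ∈ range k, padicValInt p (u k - u i) :=
  padicValInt_prod _ _ fun i hi => u_sub_ne hu (mem_range.mp hi)

lemma factor_le_eSeq (hu : IsPSeqInt p S u) {i k : ℕ} (h : i < k) :
    padicValInt p (u k - u i) ≤ eSeq p u k := by
  rw [eSeq_eq_sum hu]
  exact single_le_sum (f := fun i => padicValInt p (u k - u i)) (fun _ _ => Nat.zero_le _) (mem_range.mpr h)

lemma eSeq_dvd (hu : IsPSeqInt p S u) (k : ℕ) {s : ℤ} (hs : s ∈ S) :
    (p : ℤ) ^ eSeq p u k ∣ ∏ i ∈ range k, (s - u i) := by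
  rcases Nat.eq_zero_or_pos k with rfl | hk
  · simp [eSeq, padicValInt.one]
  · exact hu.2.2 k hk s hs

lemma eSeq_mono (hu : IsPSeqInt p S u) : Monotone (eSeq p u) := by
  apply monotone_nat_of_le_succ
  intro k
  have hne : ∏ i ∈ range k, (u (k + 1) - u i) ≠ 0 :=
    prod_ne_zero_iff.mpr fun i hi => u_sub_ne hu (by have := mem_range.mp hi; omega)
  have h1 : (p : ℤ) ^ eSeq p u k ∣ ∏ i ∈ range k, (u (k + 1) - u i) :=
    eSeq_dvd hu k (hu.1 (k + 1))
  have h2 : eSeq p u (k + 1) =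
      padicValInt p (∏ i ∈ range k, (u (k + 1) - u i)) + padicValInt p (u (k + 1) - u k) := by
    rw [eSeq, prod_range_succ, padicValInt.mul hne (u_sub_ne hu (lt_add_one k))]
  rw [padicValInt_dvd_iff] at h1
  rcases h1 with h | h
  · exact absurd h hne
  · omega

lemma dvd_prod_sub_prod (n x y : ℤ) (h : n ∣ x - y) (v : ℕ → ℤ) (k : ℕ) :
    n ∣ ∏ i ∈ range k, (x - v i) - ∏ i ∈ range k, (y - v i) := by
  induction k with
  | zero => simp
  | succ k ih =>
    rw [prod_range_succ, prod_range_succ]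
    have hid : (∏ i ∈ range k, (x - v i)) * (x - v k) - (∏ i ∈ range k, (y - v i)) * (y - v k)
        = ((∏ i ∈ range k, (x - v i)) - ∏ i ∈ range k, (y - v i)) * (x - v k)
          + (∏ i ∈ range k, (y - v i)) * (x - y) := by ring
    rw [hid]
    exact dvd_add (ih.mul_right _) (h.mul_left _)

lemma eSeq_dvd_a (hu : IsPSeqInt p S u) {a : ℤ} {m j : ℕ}
    (ham : (p : ℤ) ^ eSeq p u j ∣ a - u m) :
    (p : ℤ) ^ eSeq p u j ∣ ∏ i ∈ range j, (a - u i) := by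
  have h1 := eSeq_dvd hu j (hu.1 m)
  have h2 := dvd_prod_sub_prod _ a (u m) ham u j
  have h3 := dvd_add h2 h1
  simpa using h3

lemma val_a_sub (hu : IsPSeqInt p S u) {a : ℤ} {k : ℕ}
    (ha : (p : ℤ) ^ (eSeq p u k + 1) ∣ a - u k) {i : ℕ} (hik : i < k) :
    a - u i ≠ 0 ∧ padicValInt p (a - u i) = padicValInt p (u k - u i) := by
  have h1 : a - u i = (u k - u i) + (a - u k) := by ring
  have h2 : (p : ℤ) ^ (padicValInt p (u k - u i) + 1) ∣ a - u k :=
    dvd_trans (pow_dvd_pow _ (by have := factor_le_eSeq hu hik; omega)) ha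
  rw [h1]
  exact padicValInt_add_eq _ _ (u_sub_ne hu hik) h2

lemma val_Mkk (hu : IsPSeqInt p S u) {a : ℤ} {k : ℕ}
    (ha : (p : ℤ) ^ (eSeq p u k + 1) ∣ a - u k) :
    ∏ i ∈ range k, (a - u i) ≠ 0 ∧
      padicValInt p (∏ i ∈ range k, (a - u i)) = eSeq p u k := by
  have hne : ∀ i ∈ range k, a - u i ≠ 0 := fun i hi => (val_a_sub hu ha (mem_range.mp hi)).1
  refine ⟨prod_ne_zero_iff.mpr hne, ?_⟩
  rw [padicValInt_prod _ _ hne, eSeq_eq_sum hu]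
  exact Finset.sum_congr rfl fun i hi => (val_a_sub hu ha (mem_range.mp hi)).2

lemma dvd_sum_of_coeff (hu : IsPSeqInt p S u) {r v : ℕ} {c : ℕ → ℤ}
    (hc : ∀ k ≤ r, (p : ℤ) ^ v ∣ c k * (p : ℤ) ^ eSeq p u k) (x : ℤ)
    (hx : ∀ j ≤ r, (p : ℤ) ^ eSeq p u j ∣ ∏ i ∈ range j, (x - u i)) :
    (p : ℤ) ^ v ∣ ∑ j ∈ range (r + 1), c j * ∏ i ∈ range j, (x - u i) := by
  refine dvd_sum fun j hj => ?_
  have hjr : j ≤ r := by have := mem_range.mp hj; omega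
  obtain ⟨t, ht⟩ := hx j hjr
  have h1 : c j * ∏ i ∈ range j, (x - u i) = (c j * (p : ℤ) ^ eSeq p u j) * t := by
    rw [ht]; ring
  rw [h1]
  exact (hc j hjr).mul_right t

end PSeqCore

section HardDir

variable {p : ℕ} [hp : Fact p.Prime] {S : Set ℤ} {u : ℕ → ℤ}

lemma coeff_dvd_of_eval (hu : IsPSeqInt p S u) {r v : ℕ} {a : ℕ → ℤ} {c : ℕ → ℤ}
    (ha : ∀ i ≤ r, (p : ℤ) ^ (eSeq p u r + 1) ∣ a i - u i)
    (h : ∀ m ≤ r, (p : ℤ) ^ v ∣ ∑ j ∈ range (r + 1), c j * ∏ i ∈ range j, (a m - u i)) :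
    ∀ k ≤ r, (p : ℤ) ^ v ∣ c k * (p : ℤ) ^ eSeq p u k := by
  by_contra hcon
  push_neg at hcon
  have hpne : ((p : ℤ)) ≠ 0 := Int.natCast_ne_zero.mpr hp.out.ne_zero
  set T : Finset ℕ :=
    (range (r + 1)).filter (fun k => ¬ (p : ℤ) ^ v ∣ c k * (p : ℤ) ^ eSeq p u k) with hT
  have hTne : T.Nonempty := by
    obtain ⟨k0, hk0r, hk0⟩ := hcon
    exact ⟨k0, mem_filter.mpr ⟨mem_range.mpr (by omega), hk0⟩⟩
  have hcne : ∀ k ∈ T, c k ≠ 0 := by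
    intro k hk hc0
    exact (mem_filter.mp hk).2 (by rw [hc0]; simp)
  have hval : ∀ k ∈ T, padicValInt p (c k * (p : ℤ) ^ eSeq p u k)
      = padicValInt p (c k) + eSeq p u k := by
    intro k hk
    rw [padicValInt.mul (hcne k hk) (pow_ne_zero _ hpne), padicValInt_pow_self]
  have hwlt : ∀ k ∈ T, padicValInt p (c k) + eSeq p u k < v := by
    intro k hk
    have h2 := (mem_filter.mp hk).2
    rw [padicValInt_dvd_iff] at h2
    push_neg at h2
    rw [← hval k hk]
    exact h2.2
  set W := T.image (fun k => padicValInt p (c k) + eSeq p u k) with hW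
  have hWne : W.Nonempty := hTne.image _
  set w := W.min' hWne with hw
  obtain ⟨k1, hk1T, hk1w⟩ := mem_image.mp (W.min'_mem hWne)
  set T' := T.filter (fun k => padicValInt p (c k) + eSeq p u k = w) with hT'
  have hT'ne : T'.Nonempty := ⟨k1, mem_filter.mpr ⟨hk1T, hk1w⟩⟩
  set k := T'.min' hT'ne with hk
  have hkT' : k ∈ T' := T'.min'_mem hT'ne
  have hkT : k ∈ T := (mem_filter.mp hkT').1
  have hkwv : padicValInt p (c k) + eSeq p u k = w := (mem_filter.mp hkT').2
  have hkr : k ≤ r := by have := mem_range.mp (mem_filter.mp hkT).1; omega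
  have hwv : w < v := hkwv ▸ hwlt k hkT
  have hmin : ∀ j ∈ T, w ≤ padicValInt p (c j) + eSeq p u j := fun j hj =>
    W.min'_le _ (mem_image_of_mem _ hj)
  have hminlt : ∀ j ∈ T, j < k → w + 1 ≤ padicValInt p (c j) + eSeq p u j := by
    intro j hj hjk
    rcases lt_or_eq_of_le (hmin j hj) with hlt | heq
    · omega
    · exact absurd (T'.min'_le j (mem_filter.mpr ⟨hj, heq.symm⟩)) (by omega)
  -- divisibility of all terms except j = k by p^(w+1)
  have hclaim : ∀ j ∈ (range (r + 1)).erase k,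
      (p : ℤ) ^ (w + 1) ∣ c j * ∏ i ∈ range j, (a k - u i) := by
    intro j hj
    have hjk : j ≠ k := (mem_erase.mp hj).1
    have hjr : j ≤ r := by have := mem_range.mp (mem_erase.mp hj).2; omega
    have hEjr : eSeq p u j ≤ eSeq p u r := eSeq_mono hu hjr
    have hdvd_notT : j ∉ T → (p : ℤ) ^ v ∣ c j * (p : ℤ) ^ eSeq p u j := by
      intro hjT
      by_contra hh
      exact hjT (mem_filter.mpr ⟨mem_range.mpr (by omega), hh⟩)
    have hcj_w : (p : ℤ) ^ w ∣ c j * (p : ℤ) ^ eSeq p u j := by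
      by_cases hjT : j ∈ T
      · rw [padicValInt_dvd_iff, hval j hjT]
        exact Or.inr (hmin j hjT)
      · exact dvd_trans (pow_dvd_pow _ (by omega)) (hdvd_notT hjT)
    rcases Nat.lt_trichotomy j k with hjk' | heq | hjk'
    · -- j < k
      have hcj_w1 : (p : ℤ) ^ (w + 1) ∣ c j * (p : ℤ) ^ eSeq p u j := by
        by_cases hjT : j ∈ T
        · rw [padicValInt_dvd_iff, hval j hjT]
          exact Or.inr (hminlt j hjT hjk')
        · exact dvd_trans (pow_dvd_pow _ (by omega)) (hdvd_notT hjT)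
      have hMdvd : (p : ℤ) ^ eSeq p u j ∣ ∏ i ∈ range j, (a k - u i) := by
        apply eSeq_dvd_a hu (m := k)
        exact dvd_trans (pow_dvd_pow _ (by omega)) (ha k hkr)
      obtain ⟨t, ht⟩ := hMdvd
      have h1 : c j * ∏ i ∈ range j, (a k - u i) = (c j * (p : ℤ) ^ eSeq p u j) * t := by
        rw [ht]; ring
      rw [h1]
      exact hcj_w1.mul_right t
    · exact absurd heq hjk
    · -- k < j
      obtain ⟨t, ht⟩ := ha k hkr
      have hsplit := Finset.mul_prod_erase (range j) (fun i => a k - u i) (mem_range.mpr hjk')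
      have hpow : (p : ℤ) ^ eSeq p u j * ((p : ℤ) ^ (eSeq p u r - eSeq p u j) * (p : ℤ))
          = (p : ℤ) ^ (eSeq p u r + 1) := by
        rw [← mul_assoc, ← pow_add, ← pow_succ]
        congr 1
        omega
      have key : c j * ∏ i ∈ range j, (a k - u i)
          = (c j * (p : ℤ) ^ eSeq p u j) *
            (((p : ℤ) ^ (eSeq p u r - eSeq p u j) * (p : ℤ)) * t
              * ∏ i ∈ (range j).erase k, (a k - u i)) := by
        rw [← hsplit]
        rw [ht, ← hpow]
        ring
      rw [key, pow_succ]
      refine mul_dvd_mul hcj_w ?_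
      have : (p : ℤ) ∣ (p : ℤ) ^ (eSeq p u r - eSeq p u j) * (p : ℤ) :=
        dvd_mul_left _ _
      exact (this.mul_right t).mul_right _
  -- the diagonal term is NOT divisible by p^(w+1)
  have hMkk := val_Mkk hu (a := a k) (k := k)
    (dvd_trans (pow_dvd_pow _ (by have := eSeq_mono hu hkr; omega)) (ha k hkr))
  have hckne : c k ≠ 0 := hcne k hkT
  have hnd : ¬ (p : ℤ) ^ (w + 1) ∣ c k * ∏ i ∈ range k, (a k - u i) := by
    intro hdd
    rw [padicValInt_dvd_iff] at hdd
    rcases hdd with h0 | hle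
    · exact (mul_ne_zero hckne hMkk.1) h0
    · rw [padicValInt.mul hckne hMkk.1, hMkk.2, hkwv] at hle
      omega
  -- contradiction
  have hsum := Finset.add_sum_erase (range (r + 1))
    (fun j => c j * ∏ i ∈ range j, (a k - u i)) (a := k) (mem_range.mpr (by omega))
  have hdvd_tot : (p : ℤ) ^ (w + 1) ∣
      ∑ j ∈ range (r + 1), c j * ∏ i ∈ range j, (a k - u i) :=
    dvd_trans (pow_dvd_pow _ (by omega)) (h k hkr)
  have hdvd_rest : (p : ℤ) ^ (w + 1) ∣
      ∑ j ∈ (range (r + 1)).erase k, c j * ∏ i ∈ range j, (a k - u i) :=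
    dvd_sum hclaim
  apply hnd
  have hfin : c k * ∏ i ∈ range k, (a k - u i)
      = (∑ j ∈ range (r + 1), c j * ∏ i ∈ range j, (a k - u i))
        - ∑ j ∈ (range (r + 1)).erase k, c j * ∏ i ∈ range j, (a k - u i) :=
    eq_sub_of_add_eq hsum
  rw [hfin]
  exact dvd_sub hdvd_tot hdvd_rest

end HardDir

/-- if a₀,…,a_r are distinct and form a d-sequence for S ⊆ ℤ and
f = g/d ∈ ℚ[x] has degree ≤ r, then f ∈ Int(S,ℤ) iff f(a_i) ∈ ℤ for 0 ≤ i ≤ r. -/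
theorem stmt11 (S : Set ℤ) (d : ℤ) (hd : d ≠ 0) (g : Polynomial ℤ) (r : ℕ)
    (a : ℕ → ℤ) (hdist : ∀ i j, i ≤ r → j ≤ r → i ≠ j → a i ≠ a j)
    (hseq : IsDSeqInt d S r a)
    (f : Polynomial ℚ)
    (hfdef : f = Polynomial.C ((d : ℚ))⁻¹ * g.map (Int.castRingHom ℚ))
    (hdeg : f.natDegree ≤ r) :
    (∀ s ∈ S, ∃ m : ℤ, f.eval (s : ℚ) = (m : ℚ)) ↔
    (∀ i ≤ r, ∃ m : ℤ, f.eval ((a i : ℤ) : ℚ) = (m : ℚ)) := by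
  have hdQ : (d : ℚ) ≠ 0 := Int.cast_ne_zero.mpr hd
  -- degree of g
  have hgdeg : g.natDegree ≤ r := by
    have hmap : (g.map (Int.castRingHom ℚ)).natDegree = g.natDegree :=
      Polynomial.natDegree_map_eq_of_injective (fun x y h => by simpa using h) g
    rw [hfdef, Polynomial.natDegree_C_mul (inv_ne_zero hdQ), hmap] at hdeg
    exact hdeg
  -- eval characterization
  have heval : ∀ x : ℤ, (∃ m : ℤ, f.eval (x : ℚ) = (m : ℚ)) ↔ d ∣ g.eval x := by
    intro x
    rw [hfdef]
    simp only [Polynomial.eval_mul, Polynomial.eval_C, Polynomial.eval_intCast_map,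
      Int.coe_castRingHom, Int.cast_id]
    constructor
    · rintro ⟨m, hm⟩
      have h2 : ((g.eval x : ℤ) : ℚ) = ((d * m : ℤ) : ℚ) := by
        push_cast
        rw [← hm]
        field_simp
      exact ⟨m, by exact_mod_cast h2⟩
    · rintro ⟨m, hm⟩
      refine ⟨m, ?_⟩
      rw [hm]
      push_cast
      field_simp
  -- reduction to per-prime divisibility
  have dvd_char : ∀ y : ℤ,
      (∀ q : ℕ, q.Prime → (q : ℤ) ∣ d → ∀ k : ℕ, (q : ℤ) ^ k ∣ d → (q : ℤ) ^ k ∣ y) →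
        d ∣ y := by
    intro y hy
    rw [← Int.natAbs_dvd_natAbs, Nat.dvd_iff_prime_pow_dvd_dvd]
    intro q k hq hqk
    have hq' : q.Prime := hq
    have hdk : (q : ℤ) ^ k ∣ d := by
      have h1 : ((q ^ k : ℕ) : ℤ) ∣ ((d.natAbs : ℕ) : ℤ) := Int.natCast_dvd_natCast.mpr hqk
      have h2 := dvd_trans h1 (Int.natAbs_dvd.mpr dvd_rfl)
      exact_mod_cast h2
    rcases Nat.eq_zero_or_pos k with rfl | hk
    · simpa using one_dvd _
    · have hqd : (q : ℤ) ∣ d := dvd_trans (dvd_pow_self _ (by omega)) hdk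
      have h3 := hy q hq' hqd k hdk
      have h4 : ((q ^ k : ℕ) : ℤ) ∣ y := by push_cast; exact h3
      have h5 := Int.natAbs_dvd_natAbs.mpr h4
      simpa only [Int.natAbs_natCast] using h5
  have main : (∀ s ∈ S, d ∣ g.eval s) ↔ (∀ i ≤ r, d ∣ g.eval (a i)) := by
    constructor
    · intro hS i hir
      apply dvd_char
      intro q hq hqd k hqk
      haveI : Fact q.Prime := ⟨hq⟩
      obtain ⟨u, hu, hau⟩ := hseq q hq hqd
      obtain ⟨c, hc⟩ := newton_expand u r g hgdeg
      have hgx : ∀ x : ℤ, g.eval x = ∑ j ∈ range (r + 1), c j * ∏ i ∈ range j, (x - u i) := by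
        intro x
        rw [hc]
        simp [Polynomial.eval_finset_sum, Polynomial.eval_prod]
      have hcoef : ∀ j ≤ r, (q : ℤ) ^ k ∣ c j * (q : ℤ) ^ eSeq q u j := by
        apply coeff_dvd_of_eval hu (a := u)
        · intro i _
          simp
        · intro m hm
          rw [← hgx (u m)]
          exact dvd_trans hqk (hS (u m) (hu.1 m))
      rw [hgx]
      apply dvd_sum_of_coeff hu hcoef (a i)
      intro j hjr
      apply eSeq_dvd_a hu (m := i)
      have h0 : eSeq q u r = padicValInt q (∏ j ∈ range r, (u r - u j)) := rfl
      exact dvd_trans (pow_dvd_pow _ (by have := eSeq_mono hu hjr; omega)) (h0 ▸ hau i hir)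
    · intro hA s hs
      apply dvd_char
      intro q hq hqd k hqk
      haveI : Fact q.Prime := ⟨hq⟩
      obtain ⟨u, hu, hau⟩ := hseq q hq hqd
      obtain ⟨c, hc⟩ := newton_expand u r g hgdeg
      have hgx : ∀ x : ℤ, g.eval x = ∑ j ∈ range (r + 1), c j * ∏ i ∈ range j, (x - u i) := by
        intro x
        rw [hc]
        simp [Polynomial.eval_finset_sum, Polynomial.eval_prod]
      have hcoef : ∀ j ≤ r, (q : ℤ) ^ k ∣ c j * (q : ℤ) ^ eSeq q u j := by
        apply coeff_dvd_of_eval hu (a := a)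
        · exact hau
        · intro m hm
          rw [← hgx (a m)]
          exact dvd_trans hqk (hA m hm)
      rw [hgx]
      exact dvd_sum_of_coeff hu hcoef s (fun j hjr => eSeq_dvd hu j hs)
  constructor
  · intro hS i hir
    rw [heval (a i)]
    exact main.mp (fun s hs => (heval s).mp (hS s hs)) i hir
  · intro hA s hs
    rw [heval s]
    exact main.mpr (fun i hir => (heval (a i)).mp (hA i hir)) s hs
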